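/- arXiv:2001.04679 — 2 statements merged into one kernel-verified Lean document; each statement's English description precedes it below -/
import Mathlib

section
/- Let m, n ≥ 1 and 0 ≤ k ≤ m. The map ψ_k : Q_k(m,n) → P_k, (ν̄;μ) ↦ (μ_1, …, μ_{m−k}, n − ν_k, …, n − ν_1; −ν′_n, −ν′_{n−1}, …, −ν′_1), is a bijection between Q_k(m,n) and P_k. -/
/-- A partition: a weakly decreasing sequence of nonnegative integers with finitely many
nonzero parts, given by its (0-based) sequence of parts, so `parts i` is `ν_{i+1}`. -/
structure PPartition where
  parts : ℕ → ℕ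
  antitone : Antitone parts
  eventually_zero : ∃ N, ∀ i, N ≤ i → parts i = 0

/-- The conjugate partition value `ν′_j = #{i ≥ 1 : ν_i ≥ j}`. -/
noncomputable def conjP (ν : PPartition) (j : ℕ) : ℕ :=
  Set.ncard {i : ℕ | j ≤ ν.parts i}

/-- The length `l(ν)`: the number of nonzero parts. -/
noncomputable def lenP (ν : PPartition) : ℕ := conjP ν 1

/-- Membership in the set `P_k` of special weights for `gl(p|q)`. -/
def InPk (p q k : ℕ) (α : Fin p → ℤ) (β : Fin q → ℤ) : Prop :=
  Antitone α ∧ Antitone β ∧ k ≤ p ∧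
    (∀ j : Fin q, (j : ℕ) = 0 → β j = -(k : ℤ)) ∧
    (∀ i : Fin p, (i : ℕ) + 1 + k = p → 0 ≤ α i) ∧
    (∀ i : Fin p, (i : ℕ) + k = p → α i ≤ 0)

/-- The composite partition `ν̄;μ` belongs to `Q_k(m,n)`: `l(μ) ≤ m − k` and `ν′_n = k`. -/
noncomputable def InQk (m n k : ℕ) (ν μ : PPartition) : Prop :=
  lenP μ ≤ m - k ∧ conjP ν n = k

/-- The even part of the tuple `ψ_k(ν̄;μ) = (μ_1, …, μ_{m−k}, n−ν_k, …, n−ν_1; …)`. -/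
def psiEven (m n k : ℕ) (ν μ : PPartition) : Fin m → ℤ := fun i =>
  if (i : ℕ) + k < m then (μ.parts (i : ℕ) : ℤ)
  else (n : ℤ) - (ν.parts (m - 1 - (i : ℕ)) : ℤ)

/-- The odd part of the tuple `ψ_k(ν̄;μ) = (…; −ν′_n, −ν′_{n−1}, …, −ν′_1)`. -/
noncomputable def psiOdd (n : ℕ) (ν : PPartition) : Fin n → ℤ := fun j =>
  -((conjP ν (n - (j : ℕ)) : ℤ))


theorem PPartition.ext' {ν μ : PPartition} (h : ν.parts = μ.parts) : ν = μ := by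
  cases ν; cases μ; simpa using h

theorem ncard_Iio_nat (c : ℕ) : (Set.Iio c).ncard = c := by
  rw [← Finset.coe_Iio, Set.ncard_coe_finset, Nat.card_Iio]

theorem conjP_eq_of {ν : PPartition} {j c : ℕ} (h : ∀ i, j ≤ ν.parts i ↔ i < c) :
    conjP ν j = c := by
  have hs : {i : ℕ | j ≤ ν.parts i} = Set.Iio c := Set.ext fun i => h i
  rw [conjP, hs, ncard_Iio_nat]

theorem conjP_spec (ν : PPartition) {j : ℕ} (hj : 1 ≤ j) (i : ℕ) :
    j ≤ ν.parts i ↔ i < conjP ν j := by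
  have hex : ∃ i, ν.parts i < j := by
    obtain ⟨N, hN⟩ := ν.eventually_zero
    exact ⟨N, by rw [hN N le_rfl]; omega⟩
  have hiff : ∀ i, j ≤ ν.parts i ↔ i < Nat.find hex := by
    intro i
    constructor
    · intro h
      by_contra hc
      push_neg at hc
      have h1 := ν.antitone hc
      have h2 := Nat.find_spec hex
      omega
    · intro h
      have := Nat.find_min hex h
      omega
  rw [conjP_eq_of hiff]
  exact hiff i

theorem conjP_anti (ν : PPartition) {a b : ℕ} (ha : 1 ≤ a) (hab : a ≤ b) :
    conjP ν b ≤ conjP ν a := by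
  by_contra h
  push_neg at h
  have h1 := (conjP_spec ν (ha.trans hab) (conjP ν a)).2 h
  have h2 := (conjP_spec ν ha (conjP ν a)).1 (hab.trans h1)
  omega

theorem parts_le_of_conj_eq {ν₁ ν₂ : PPartition} {n i : ℕ}
    (hc : ∀ t, 1 ≤ t → t ≤ n → conjP ν₁ t = conjP ν₂ t)
    (h1 : ν₁.parts i ≤ n) : ν₁.parts i ≤ ν₂.parts i := by
  rcases Nat.eq_zero_or_pos (ν₁.parts i) with h | h
  · omega
  · have h2 := (conjP_spec ν₁ h i).1 le_rfl
    rw [hc _ h h1] at h2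
    exact (conjP_spec ν₂ h i).2 h2

def cval (n : ℕ) (β : Fin n → ℤ) (j : ℕ) : ℕ :=
  if h : 1 ≤ j ∧ j ≤ n then (-(β ⟨n - j, by omega⟩)).toNat else 0

def muParts (m k : ℕ) (α : Fin m → ℤ) (i : ℕ) : ℕ :=
  if h : i + k < m then (α ⟨i, by omega⟩).toNat else 0

def nuParts (m n k : ℕ) (α : Fin m → ℤ) (β : Fin n → ℤ) (i : ℕ) : ℕ :=
  if h : i < k ∧ k ≤ m then ((n : ℤ) - α ⟨m - 1 - i, by omega⟩).toNat
  else Nat.findGreatest (fun j => i < cval n β j) n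

theorem mem_facts {m n k : ℕ} (hn : 0 < n) {ν μ : PPartition} (h : InQk m n k ν μ) :
    (∀ i, i < k → n ≤ ν.parts i) ∧ (∀ i, k ≤ i → ν.parts i < n) ∧
      (∀ i, m - k ≤ i → μ.parts i = 0) := by
  obtain ⟨h1, h2⟩ := h
  simp only [lenP] at h1
  refine ⟨?_, ?_, ?_⟩
  · intro i hi
    exact (conjP_spec ν hn i).2 (by omega)
  · intro i hi
    by_contra hc
    push_neg at hc
    have := (conjP_spec ν hn i).1 hc
    omega
  · intro i hi
    by_contra hc
    have := (conjP_spec μ le_rfl i).1 (by omega)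
    omega

/-- The map `ψ_k : Q_k(m,n) → P_k` is a bijection between `Q_k(m,n)`
and `P_k`. -/
theorem psi_bijOn (m n k : ℕ) (hm : 0 < m) (hn : 0 < n) (hk : k ≤ m) :
    Set.BijOn
      (fun p : PPartition × PPartition =>
        ((psiEven m n k p.1 p.2, psiOdd n p.1) : (Fin m → ℤ) × (Fin n → ℤ)))
      {p : PPartition × PPartition | InQk m n k p.1 p.2}
      {w : (Fin m → ℤ) × (Fin n → ℤ) | InPk m n k w.1 w.2} := by
  refine ⟨?_, ?_, ?_⟩
  · -- MapsTo
    rintro ⟨ν, μ⟩ hp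
    replace hp : InQk m n k ν μ := hp
    obtain ⟨hge, hlt, hμ0⟩ := mem_facts hn hp
    obtain ⟨hlen, hconj⟩ := hp
    refine ⟨?_, ?_, hk, ?_, ?_, ?_⟩
    · -- Antitone psiEven
      intro a b hab
      have hab' : (a : ℕ) ≤ (b : ℕ) := hab
      have hbm := b.isLt
      simp only [psiEven]
      split_ifs with h1 h2 h2
      · exact_mod_cast μ.antitone hab'
      · omega
      · have h3 := hge (m - 1 - (b : ℕ)) (by omega)
        have h4 : (0:ℤ) ≤ (μ.parts (a : ℕ) : ℤ) := Int.natCast_nonneg _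
        omega
      · have h5 := ν.antitone (show m - 1 - (b : ℕ) ≤ m - 1 - (a : ℕ) by omega)
        omega
    · -- Antitone psiOdd
      intro a b hab
      have hab' : (a : ℕ) ≤ (b : ℕ) := hab
      have hbn := b.isLt
      have h1 := conjP_anti ν (show 1 ≤ n - (b : ℕ) by omega)
        (show n - (b : ℕ) ≤ n - (a : ℕ) by omega)
      simp only [psiOdd]
      omega
    · -- β₀ = -k
      intro j hj
      simp only [psiOdd, hj, Nat.sub_zero, hconj]
    · -- α at m-k-1 nonneg
      intro i hi
      simp only [psiEven, if_pos (show (i : ℕ) + k < m by omega)]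
      exact Int.natCast_nonneg _
    · -- α at m-k nonpos
      intro i hi
      have him := i.isLt
      simp only [psiEven, if_neg (show ¬((i : ℕ) + k < m) by omega)]
      have h3 := hge (m - 1 - (i : ℕ)) (by omega)
      omega
  · -- InjOn
    rintro ⟨ν₁, μ₁⟩ hp ⟨ν₂, μ₂⟩ hq heq
    replace hp : InQk m n k ν₁ μ₁ := hp
    replace hq : InQk m n k ν₂ μ₂ := hq
    obtain ⟨hge₁, hlt₁, hμ₁⟩ := mem_facts hn hp
    obtain ⟨hge₂, hlt₂, hμ₂⟩ := mem_facts hn hq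
    simp only [Prod.mk.injEq] at heq
    obtain ⟨hE, hO⟩ := heq
    have hconjeq : ∀ t, 1 ≤ t → t ≤ n → conjP ν₁ t = conjP ν₂ t := by
      intro t h1 h2
      have h3 := congrFun hO ⟨n - t, by omega⟩
      simp only [psiOdd] at h3
      rw [show n - (((⟨n - t, by omega⟩ : Fin n)) : ℕ) = t by simp; omega] at h3
      omega
    have hν : ν₁ = ν₂ := by
      apply PPartition.ext'
      funext i
      rcases lt_or_ge i k with hik | hik
      · have hik' : m - 1 - i < m := by omega
        have h3 := congrFun hE ⟨m - 1 - i, hik'⟩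
        simp only [psiEven] at h3
        rw [if_neg (show ¬(((⟨m - 1 - i, hik'⟩ : Fin m) : ℕ) + k < m) by simp; omega),
          show m - 1 - ((⟨m - 1 - i, hik'⟩ : Fin m) : ℕ) = i by simp; omega] at h3
        omega
      · have l1 := parts_le_of_conj_eq hconjeq (le_of_lt (hlt₁ i hik))
        have l2 := parts_le_of_conj_eq (fun t a b => (hconjeq t a b).symm)
          (le_of_lt (hlt₂ i hik))
        omega
    have hμ : μ₁ = μ₂ := by
      apply PPartition.ext'
      funext i
      rcases lt_or_ge (i + k) m with him | him
      · have h3 := congrFun hE ⟨i, by omega⟩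
        simp only [psiEven] at h3
        rw [if_pos (show ((⟨i, by omega⟩ : Fin m) : ℕ) + k < m by simpa), if_pos
          (show ((⟨i, by omega⟩ : Fin m) : ℕ) + k < m by simpa)] at h3
        simpa using h3
      · rw [hμ₁ i (by omega), hμ₂ i (by omega)]
    rw [hν, hμ]
  · -- SurjOn
    rintro ⟨α, β⟩ hw
    replace hw : InPk m n k α β := hw
    obtain ⟨hα, hβ, -, hβ0, hpos, hneg⟩ := hw
    have hβ0' : β ⟨0, hn⟩ = -(k : ℤ) := hβ0 ⟨0, hn⟩ rfl
    have hβle : ∀ j : Fin n, β j ≤ -(k : ℤ) := by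
      intro j
      have h1 := hβ (show (⟨0, hn⟩ : Fin n) ≤ j by rw [Fin.le_def]; exact Nat.zero_le _)
      rw [hβ0'] at h1
      exact h1
    have hcval : ∀ t (h1 : 1 ≤ t) (h2 : t ≤ n) (hnt : n - t < n),
        (cval n β t : ℤ) = -(β ⟨n - t, hnt⟩) := by
      intro t h1 h2 hnt
      rw [cval, dif_pos ⟨h1, h2⟩, Int.toNat_of_nonneg
        (by have := hβle ⟨n - t, hnt⟩; omega)]
    have hck : ∀ t, 1 ≤ t → t ≤ n → k ≤ cval n β t := by
      intro t h1 h2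
      have h3 : n - t < n := by omega
      have h4 := hβle ⟨n - t, h3⟩
      have h5 := hcval t h1 h2 h3
      omega
    have hcn : cval n β n = k := by
      have h3 : n - n < n := by omega
      have h5 := hcval n hn le_rfl h3
      rw [show (⟨n - n, h3⟩ : Fin n) = ⟨0, hn⟩ by ext; simp, hβ0'] at h5
      omega
    have hcanti : ∀ a b, 1 ≤ a → a ≤ b → b ≤ n → cval n β b ≤ cval n β a := by
      intro a b h1 h2 h3
      have ha' : n - a < n := by omega
      have hb' : n - b < n := by omega
      have h4 := hβ (show (⟨n - b, hb'⟩ : Fin n) ≤ ⟨n - a, ha'⟩ by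
        rw [Fin.mk_le_mk]; omega)
      have e1 := hcval a h1 (h2.trans h3) ha'
      have e2 := hcval b (h1.trans h2) h3 hb'
      omega
    have hαpos : ∀ i : Fin m, (i : ℕ) + k < m → 0 ≤ α i := by
      intro i hi
      have h1 : m - k - 1 < m := by omega
      have h2 := hpos ⟨m - k - 1, h1⟩ (show m - k - 1 + 1 + k = m by omega)
      have h3 := hα (show i ≤ ⟨m - k - 1, h1⟩ by
        rw [Fin.le_def]; show (i : ℕ) ≤ m - k - 1; omega)
      omega
    have hαneg : ∀ i : Fin m, m ≤ (i : ℕ) + k → α i ≤ 0 := by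
      intro i hi
      have hik := i.isLt
      have h1 : m - k < m := by omega
      have h2 := hneg ⟨m - k, h1⟩ (show m - k + k = m by omega)
      have h3 := hα (show (⟨m - k, h1⟩ : Fin m) ≤ i by
        rw [Fin.le_def]; show m - k ≤ (i : ℕ); omega)
      omega
    have hnu_lt : ∀ i (hik : i < k) (hm1 : m - 1 - i < m),
        nuParts m n k α β i = ((n : ℤ) - α ⟨m - 1 - i, hm1⟩).toNat := by
      intro i hik hm1
      rw [nuParts, dif_pos ⟨hik, hk⟩]
    have hnu_ge : ∀ i, k ≤ i →
        nuParts m n k α β i = Nat.findGreatest (fun j => i < cval n β j) n := by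
      intro i hik
      rw [nuParts, dif_neg (by omega)]
    have hkey : ∀ t, 1 ≤ t → t ≤ n → ∀ i, t ≤ nuParts m n k α β i ↔ i < cval n β t := by
      intro t h1 h2 i
      rcases lt_or_ge i k with hik | hik
      · have hm1 : m - 1 - i < m := by omega
        rw [hnu_lt i hik hm1]
        have h3 := hαneg ⟨m - 1 - i, hm1⟩ (show m ≤ ((⟨m - 1 - i, hm1⟩ : Fin m) : ℕ) + k by
          show m ≤ m - 1 - i + k; omega)
        have h4 := hck t h1 h2
        constructor
        · intro _; omega
        · intro _; omega
      · rw [hnu_ge i hik]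
        constructor
        · intro ht
          have h6 : Nat.findGreatest (fun j => i < cval n β j) n ≠ 0 := by omega
          have h7 := (Nat.findGreatest_eq_iff.1
            (rfl : Nat.findGreatest (fun j => i < cval n β j) n = _)).2.1 h6
          have h8 := Nat.findGreatest_le (P := fun j => i < cval n β j) n
          have h9 := hcanti t _ h1 ht h8
          omega
        · intro ht
          exact Nat.le_findGreatest h2 ht
    have hν_anti : Antitone (nuParts m n k α β) := by
      intro a b hab
      rcases lt_or_ge b k with hbk | hbk
      · have hak : a < k := lt_of_le_of_lt hab hbk
        have hma : m - 1 - a < m := by omega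
        have hmb : m - 1 - b < m := by omega
        rw [hnu_lt a hak hma, hnu_lt b hbk hmb]
        have h4 := hα (show (⟨m - 1 - b, hmb⟩ : Fin m) ≤ ⟨m - 1 - a, hma⟩ by
          rw [Fin.mk_le_mk]; omega)
        omega
      · rcases lt_or_ge a k with hak | hak
        · have h1 := (hkey n hn le_rfl a).2 (by rw [hcn]; omega)
          have h2 : nuParts m n k α β b < n := by
            by_contra hcon
            push_neg at hcon
            have := (hkey n hn le_rfl b).1 hcon
            rw [hcn] at this
            omega
          omega
        · rw [hnu_ge a hak, hnu_ge b hbk]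
          exact Nat.findGreatest_mono_left (fun j hj => by omega) n
    have hν_ev : ∃ N, ∀ i, N ≤ i → nuParts m n k α β i = 0 := by
      refine ⟨k + cval n β 1 + 1, fun i hi => ?_⟩
      rw [hnu_ge i (by omega)]
      by_contra hcon
      have h7 := (Nat.findGreatest_eq_iff.1
        (rfl : Nat.findGreatest (fun j => i < cval n β j) n = _)).2.1 hcon
      have h8 := Nat.findGreatest_le (P := fun j => i < cval n β j) n
      have h9 := hcanti 1 _ le_rfl (by omega) h8
      omega
    have hμ_eq : ∀ i (h : i + k < m) (h' : i < m), muParts m k α i = (α ⟨i, h'⟩).toNat := by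
      intro i h h'
      rw [muParts, dif_pos h]
    have hμ0' : ∀ i, m ≤ i + k → muParts m k α i = 0 := by
      intro i h
      rw [muParts, dif_neg (by omega)]
    have hμ_anti : Antitone (muParts m k α) := by
      intro a b hab
      rcases lt_or_ge (b + k) m with hbm | hbm
      · have ham : a + k < m := by omega
        have ha' : a < m := by omega
        have hb' : b < m := by omega
        rw [hμ_eq a ham ha', hμ_eq b hbm hb']
        have h4 := hα (show (⟨a, ha'⟩ : Fin m) ≤ ⟨b, hb'⟩ by rw [Fin.mk_le_mk]; exact hab)
        omega
      · rw [hμ0' b (by omega)]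
        omega
    refine ⟨(⟨nuParts m n k α β, hν_anti, hν_ev⟩,
      ⟨muParts m k α, hμ_anti, ⟨m, fun i hi => hμ0' i (by omega)⟩⟩), ⟨?_, ?_⟩, ?_⟩
    · -- lenP μ ≤ m - k
      show lenP _ ≤ m - k
      rw [lenP]
      by_contra hcon
      push_neg at hcon
      have h1 := (conjP_spec _ le_rfl (m - k)).2 hcon
      have h2 : 1 ≤ muParts m k α (m - k) := h1
      rw [hμ0' (m - k) (by omega)] at h2
      omega
    · -- conjP ν n = k
      apply conjP_eq_of
      intro i
      show n ≤ nuParts m n k α β i ↔ i < k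
      constructor
      · intro h
        have := (hkey n hn le_rfl i).1 h
        omega
      · intro h
        exact (hkey n hn le_rfl i).2 (by omega)
    · -- image equality
      have hconj : ∀ t, 1 ≤ t → t ≤ n →
          conjP (⟨nuParts m n k α β, hν_anti, hν_ev⟩ : PPartition) t = cval n β t :=
        fun t a b => conjP_eq_of (hkey t a b)
      simp only [Prod.mk.injEq]
      constructor
      · funext i
        have hi' := i.isLt
        rcases lt_or_ge ((i : ℕ) + k) m with him | him
        · simp only [psiEven, if_pos him]
          show (muParts m k α (i : ℕ) : ℤ) = α i
          rw [hμ_eq (i : ℕ) him hi']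
          have h1 := hαpos i him
          rw [Fin.eta]
          omega
        · simp only [psiEven, if_neg (show ¬((i : ℕ) + k < m) by omega)]
          have h1 : m - 1 - (i : ℕ) < k := by omega
          have hm1 : m - 1 - (m - 1 - (i : ℕ)) < m := by omega
          show (n : ℤ) - (nuParts m n k α β (m - 1 - (i : ℕ)) : ℤ) = α i
          rw [hnu_lt _ h1 hm1]
          rw [show (⟨m - 1 - (m - 1 - (i : ℕ)), hm1⟩ : Fin m) = i by ext; simp; omega]
          have h2 := hαneg i (by omega)
          omega
      · funext j
        have hj' := j.isLt
        simp only [psiOdd]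
        have h1 : 1 ≤ n - (j : ℕ) := by omega
        have h2 : n - (j : ℕ) ≤ n := by omega
        have h4 : n - (n - (j : ℕ)) < n := by omega
        rw [hconj _ h1 h2, hcval _ h1 h2 h4]
        rw [show (⟨n - (n - (j : ℕ)), h4⟩ : Fin n) = j by ext; simp; omega]
        exact neg_neg _
end

section
/- Let K be a field, let x_1, …, x_m and y_1, …, y_n (n ≥ 1) be nonzero elements of K, and let ν̄;μ be a composite partition. Then s_{ν̄;μ}(x/y) = Σ_{α, β} s_{β̄;α}(x/y^{(n−1)}) · y_n^{a−b}, where y^{(n−1)} = (y_1, …, y_{n−1}), the sum is over all pairs of partitions α, β with 0 ≤ μ_i − α_i ≤ 1 for all i and 0 ≤ ν_i − β_i ≤ 1 for all i, a = Σ_i (μ_i − α_i), b = Σ_i (ν_i − β_i), and each s_{β̄;α}(x/y^{(n−1)}) is computed by the same determinant with β and α padded with zero parts to l(ν) and l(μ) parts respectively. -/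
open Finset

variable {K : Type*} [Field K] {ι : Type*} [DecidableEq ι] {ι' : Type*} [DecidableEq ι']

/-- The complete homogeneous symmetric polynomial `h_r` evaluated at the variables
`x_i`, `i ∈ s`. -/
def hh (s : Finset ι) (x : ι → K) (r : ℕ) : K :=
  ∑ t ∈ s.sym r, (Multiset.map x (t : Multiset ι)).prod

/-- The elementary symmetric polynomial `e_r` evaluated at the variables `y_j`, `j ∈ s`
(it vanishes when `r` exceeds the number of variables). -/
def ee (s : Finset ι) (x : ι → K) (r : ℕ) : K :=
  ∑ t ∈ s.powersetCard r, ∏ i ∈ t, x i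

/-- The complete supersymmetric function `h_r(x/y) = Σ_{k=0}^{r} h_k(x) e_{r−k}(y)` for
`r ≥ 0`, and `h_r(x/y) = 0` for `r < 0`. -/
def hsupZ (sx : Finset ι) (x : ι → K) (sy : Finset ι') (y : ι' → K) (r : ℤ) : K :=
  if 0 ≤ r then ∑ k ∈ Finset.range (r.toNat + 1), hh sx x k * ee sy y (r.toNat - k) else 0

/-- `ḣ_r(x/y) = h_r(x̄/ȳ)`, evaluated at the inverted variables. -/
def hdotZ (sx : Finset ι) (x : ι → K) (sy : Finset ι') (y : ι' → K) (r : ℤ) : K :=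
  hsupZ sx (fun i => (x i)⁻¹) sy (fun j => (y j)⁻¹) r

/-- The supersymmetric S-function `s_{ν̄;μ}(x/y)` of a composite partition `ν̄;μ`, given
as the `(a+b) × (a+b)` determinant with `a = l(ν)`, `b = l(μ)` (0-based partition
functions `nu`, `mu`): in 1-based indices, the entry in row `s = a, …, 1` / `i = 1, …, b`
and column `t = a, …, 1` / `j = 1, …, b` is `ḣ_{ν_t+s−t}(x/y)`, `h_{μ_j−s−j+1}(x/y)`,
`ḣ_{ν_t−i−t+1}(x/y)`, `h_{μ_j+i−j}(x/y)` respectively; all four prescriptions collapse to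
the single formula below in terms of the 0-based row index `u` and column index `v`. -/
def superS (sx : Finset ι) (x : ι → K) (sy : Finset ι') (y : ι' → K)
    (a b : ℕ) (nu mu : ℕ → ℕ) : K :=
  Matrix.det (Matrix.of fun u v : Fin (a + b) =>
    if (v : ℕ) < a then
      hdotZ sx x sy y ((nu (a - 1 - (v : ℕ)) : ℤ) + ((v : ℕ) : ℤ) - ((u : ℕ) : ℤ))
    else
      hsupZ sx x sy y ((mu ((v : ℕ) - a) : ℤ) + ((u : ℕ) : ℤ) - ((v : ℕ) : ℤ)))

open scoped Classical

set_option linter.unusedSectionVars false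
set_option linter.unusedVariables false
set_option maxHeartbeats 1000000

lemma ee_zero (s : Finset ι) (x : ι → K) : ee s x 0 = 1 := by
  simp [ee]

lemma ee_insert (a : ι) (s : Finset ι) (ha : a ∉ s) (x : ι → K) (r : ℕ) :
    ee (insert a s) x (r + 1) = ee s x (r + 1) + x a * ee s x r := by
  unfold ee
  have hdisj : Disjoint (s.powersetCard (r + 1)) ((s.powersetCard r).image (insert a)) := by
    rw [Finset.disjoint_right]
    intro t ht ht'
    obtain ⟨u, _, rfl⟩ := Finset.mem_image.1 ht
    exact ha ((Finset.mem_powersetCard.1 ht').1 (Finset.mem_insert_self a u))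
  have hinj : ∀ t ∈ s.powersetCard r, ∀ u ∈ s.powersetCard r,
      insert a t = insert a u → t = u := by
    intro t ht u hu h
    have hts : t ⊆ s := (Finset.mem_powersetCard.1 ht).1
    have hus : u ⊆ s := (Finset.mem_powersetCard.1 hu).1
    have h1 : Finset.erase (insert a t) a = t := Finset.erase_insert (fun hm => ha (hts hm))
    have h2 : Finset.erase (insert a u) a = u := Finset.erase_insert (fun hm => ha (hus hm))
    rw [← h1, ← h2, h]
  rw [Finset.powersetCard_succ_insert ha, Finset.sum_union hdisj, Finset.sum_image hinj,
    Finset.mul_sum]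
  congr 1
  refine Finset.sum_congr rfl fun t ht => ?_
  rw [Finset.prod_insert (fun h => ha ((Finset.mem_powersetCard.1 ht).1 h))]

lemma hsupZ_insert (sx : Finset ι) (x : ι → K) (a : ι') (sy : Finset ι') (ha : a ∉ sy)
    (y : ι' → K) (r : ℤ) :
    hsupZ sx x (insert a sy) y r = hsupZ sx x sy y r + y a * hsupZ sx x sy y (r - 1) := by
  by_cases hr : 0 ≤ r
  · by_cases hr0 : r = 0
    · subst hr0
      have h1 : ¬ (0:ℤ) ≤ 0 - 1 := by omega
      simp [hsupZ, h1, ee_zero]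
    · obtain ⟨R, rfl⟩ : ∃ R : ℕ, r = (R : ℤ) + 1 := ⟨(r - 1).toNat, by omega⟩
      have hR : ((R : ℤ) + 1).toNat = R + 1 := by omega
      have hR1 : ((R : ℤ) + 1 - 1).toNat = R := by omega
      unfold hsupZ
      rw [if_pos hr, if_pos (by omega : (0:ℤ) ≤ (R : ℤ) + 1 - 1), hR, hR1]
      have key : ∀ k ∈ Finset.range (R + 1 + 1),
          hh sx x k * ee (insert a sy) y (R + 1 - k) =
            hh sx x k * ee sy y (R + 1 - k) +
              (if k < R + 1 then y a * (hh sx x k * ee sy y (R - k)) else 0) := by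
        intro k hk
        by_cases hkR : k < R + 1
        · have h2 : R + 1 - k = (R - k) + 1 := by omega
          rw [if_pos hkR, h2, ee_insert a sy ha]
          ring
        · have hk' : k = R + 1 := by
            have := Finset.mem_range.1 hk; omega
          subst hk'
          rw [if_neg (lt_irrefl _)]
          simp [Nat.sub_self, ee_zero]
      rw [Finset.sum_congr rfl key, Finset.sum_add_distrib]
      congr 1
      rw [Finset.sum_range_succ, if_neg (lt_irrefl _), add_zero, Finset.mul_sum]
      exact Finset.sum_congr rfl fun k hk => if_pos (Finset.mem_range.1 hk)
  · have hr' : ¬ (0:ℤ) ≤ r - 1 := by omega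
    simp [hsupZ, hr, hr']
    exact fun h => absurd h (by omega)

lemma hdotZ_insert (sx : Finset ι) (x : ι → K) (a : ι') (sy : Finset ι') (ha : a ∉ sy)
    (y : ι' → K) (r : ℤ) :
    hdotZ sx x (insert a sy) y r = hdotZ sx x sy y r + (y a)⁻¹ * hdotZ sx x sy y (r - 1) :=
  hsupZ_insert sx _ a sy ha _ r

/-- The column family of the `superS` determinant, with argument shifted by `d`. -/
def Pmat (lν lμ : ℕ) (nu mu : ℕ → ℕ) (sx : Finset ι) (x : ι → K) (sy : Finset ι')
    (yy : ι' → K) (d : ℤ) : Fin (lν + lμ) → Fin (lν + lμ) → K :=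
  fun v u =>
    if (v : ℕ) < lν then
      hdotZ sx x sy yy ((nu (lν - 1 - (v : ℕ)) : ℤ) + ((v : ℕ) : ℤ) - ((u : ℕ) : ℤ) + d)
    else
      hsupZ sx x sy yy ((mu ((v : ℕ) - lν) : ℤ) + ((u : ℕ) : ℤ) - ((v : ℕ) : ℤ) + d)

lemma superS_eq_Pmat (sx : Finset ι) (x : ι → K) (sy : Finset ι') (yy : ι' → K)
    (lν lμ : ℕ) (nu mu : ℕ → ℕ) :
    superS sx x sy yy lν lμ nu mu =
      Matrix.det (Matrix.of fun u v => Pmat lν lμ nu mu sx x sy yy 0 v u) := by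
  unfold superS Pmat
  congr 1
  ext u v
  simp only [Matrix.of_apply]
  split <;> rw [add_zero]

lemma Pmat_insert (lν lμ : ℕ) (nu mu : ℕ → ℕ) (sx : Finset ι) (x : ι → K) (a : ι')
    (sy : Finset ι') (ha : a ∉ sy) (yy : ι' → K) (d : ℤ) (v u : Fin (lν + lμ)) :
    Pmat lν lμ nu mu sx x (insert a sy) yy d v u =
      Pmat lν lμ nu mu sx x sy yy d v u +
        (if (v : ℕ) < lν then (yy a)⁻¹ else yy a) *
          Pmat lν lμ nu mu sx x sy yy (d - 1) v u := by
  unfold Pmat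
  by_cases hv : (v : ℕ) < lν
  · simp only [if_pos hv]
    rw [hdotZ_insert sx x a sy ha yy]
    congr 2
    ring
  · simp only [if_neg hv]
    rw [hsupZ_insert sx x a sy ha yy]
    congr 2
    ring

/-- Multilinear expansion of the determinant in the columns. -/
lemma det_expand {N : ℕ} (P Q : Fin N → Fin N → K) (c : Fin N → K) :
    Matrix.det (Matrix.of fun u v : Fin N => P v u + c v * Q v u) =
      ∑ S : Finset (Fin N), (∏ v ∈ S, c v) *
        Matrix.det (Matrix.of fun u v : Fin N => if v ∈ S then Q v u else P v u) := by
  have e0 : Matrix.det (Matrix.of fun u v : Fin N => P v u + c v * Q v u)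
      = (Matrix.detRowAlternating (R := K) (n := Fin N)).toMultilinearMap
          ((fun v => c v • Q v) + fun v => P v) := by
    rw [← Matrix.det_transpose]
    show Matrix.det _ = Matrix.det _
    congr 1
    ext v u
    simp only [Matrix.transpose_apply, Matrix.of_apply, Pi.add_apply, Pi.smul_apply,
      smul_eq_mul]
    ring
  rw [e0, MultilinearMap.map_add_univ]
  refine Finset.sum_congr rfl fun S _ => ?_
  have h2 : S.piecewise (fun v => c v • Q v) (fun v => P v)
      = S.piecewise (fun v => c v • (S.piecewise Q (fun w => P w)) v)
          (S.piecewise Q fun w => P w) := by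
    funext v
    by_cases hv : v ∈ S
    · simp [Finset.piecewise_eq_of_mem _ _ _ hv]
    · simp [Finset.piecewise_eq_of_notMem _ _ _ hv]
  rw [h2, MultilinearMap.map_piecewise_smul, smul_eq_mul]
  congr 1
  conv_rhs => rw [← Matrix.det_transpose]
  show Matrix.det _ = Matrix.det _
  congr 1
  funext v u
  show S.piecewise Q (fun w => P w) v u = (if v ∈ S then Q v u else P v u)
  by_cases hv : v ∈ S
  · rw [Finset.piecewise_eq_of_mem _ _ _ hv, if_pos hv]
  · rw [Finset.piecewise_eq_of_notMem _ _ _ hv, if_neg hv]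

/-- `superS` vanishes if two adjacent `μ`-columns coincide. -/
lemma superS_zero_of_mu (sx : Finset ι) (x : ι → K) (sy : Finset ι') (yy : ι' → K)
    (lν lμ : ℕ) (nu mu : ℕ → ℕ) (i : ℕ) (hi1 : i + 1 < lμ)
    (h : (mu (i + 1) : ℤ) = (mu i : ℤ) + 1) :
    superS sx x sy yy lν lμ nu mu = 0 := by
  unfold superS
  refine Matrix.det_zero_of_column_eq
    (i := (⟨lν + i, by omega⟩ : Fin (lν + lμ))) (j := ⟨lν + i + 1, by omega⟩) ?_ ?_
  · intro hEq
    rw [Fin.ext_iff] at hEq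
    have : lν + i = lν + i + 1 := hEq
    omega
  · intro u
    simp only [Matrix.of_apply]
    rw [if_neg (show ¬ ((⟨lν + i, by omega⟩ : Fin (lν + lμ)) : ℕ) < lν from by
          show ¬ lν + i < lν; omega),
      if_neg (show ¬ ((⟨lν + i + 1, by omega⟩ : Fin (lν + lμ)) : ℕ) < lν from by
          show ¬ lν + i + 1 < lν; omega)]
    show hsupZ sx x sy yy ((mu (lν + i - lν) : ℤ) + ((u : ℕ) : ℤ) - ((lν + i : ℕ) : ℤ))
        = hsupZ sx x sy yy
            ((mu (lν + i + 1 - lν) : ℤ) + ((u : ℕ) : ℤ) - ((lν + i + 1 : ℕ) : ℤ))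
    rw [show lν + i - lν = i from by omega, show lν + i + 1 - lν = i + 1 from by omega]
    congr 1
    omega

/-- `superS` vanishes if two adjacent `ν`-columns coincide. -/
lemma superS_zero_of_nu (sx : Finset ι) (x : ι → K) (sy : Finset ι') (yy : ι' → K)
    (lν lμ : ℕ) (nu mu : ℕ → ℕ) (i : ℕ) (hi1 : i + 1 < lν)
    (h : (nu (i + 1) : ℤ) = (nu i : ℤ) + 1) :
    superS sx x sy yy lν lμ nu mu = 0 := by
  unfold superS
  refine Matrix.det_zero_of_column_eq
    (i := (⟨lν - 1 - (i + 1), by omega⟩ : Fin (lν + lμ)))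
    (j := ⟨lν - 1 - i, by omega⟩) ?_ ?_
  · intro hEq
    rw [Fin.ext_iff] at hEq
    have : lν - 1 - (i + 1) = lν - 1 - i := hEq
    omega
  · intro u
    simp only [Matrix.of_apply]
    rw [if_pos (show ((⟨lν - 1 - (i + 1), by omega⟩ : Fin (lν + lμ)) : ℕ) < lν from by
          show lν - 1 - (i + 1) < lν; omega),
      if_pos (show ((⟨lν - 1 - i, by omega⟩ : Fin (lν + lμ)) : ℕ) < lν from by
          show lν - 1 - i < lν; omega)]
    show hdotZ sx x sy yy
        ((nu (lν - 1 - (lν - 1 - (i + 1))) : ℤ) + ((lν - 1 - (i + 1) : ℕ) : ℤ)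
          - ((u : ℕ) : ℤ))
      = hdotZ sx x sy yy
          ((nu (lν - 1 - (lν - 1 - i)) : ℤ) + ((lν - 1 - i : ℕ) : ℤ) - ((u : ℕ) : ℤ))
    rw [show lν - 1 - (lν - 1 - (i + 1)) = i + 1 from by omega,
      show lν - 1 - (lν - 1 - i) = i from by omega]
    congr 1
    omega

/-- If subtracting the indicator of `A` from an antitone `mu` fails to be antitone, there is
an adjacent violation, which forces two equal columns. -/
lemma exists_bad (mu : ℕ → ℕ) (hmu : Antitone mu) (lmu : ℕ)
    (hlen : ∀ i, 0 < mu i ↔ i < lmu) (A : Finset ℕ) (hA : A ⊆ Finset.range lmu)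
    (hna : ¬ Antitone (fun i => mu i - (if i ∈ A then 1 else 0))) :
    ∃ i, i + 1 < lmu ∧
      ((mu (i + 1) - (if i + 1 ∈ A then 1 else 0) : ℕ) : ℤ)
        = ((mu i - (if i ∈ A then 1 else 0) : ℕ) : ℤ) + 1 := by
  have h0 : ¬ ∀ i, mu (i + 1) - (if i + 1 ∈ A then 1 else 0) ≤ mu i - (if i ∈ A then 1 else 0) :=
    fun h => hna (antitone_nat_of_succ_le h)
  push_neg at h0
  obtain ⟨i, hi⟩ := h0
  have h1 : mu (i + 1) ≤ mu i := hmu (Nat.le_succ i)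
  by_cases hiA : i ∈ A
  · have hilμ : i < lmu := Finset.mem_range.1 (hA hiA)
    have hpos : 0 < mu i := (hlen i).2 hilμ
    by_cases hi1A : i + 1 ∈ A
    · simp only [hiA, hi1A, if_true] at hi
      omega
    · simp only [hiA, hi1A, if_true, if_false] at hi
      have heq : mu (i + 1) = mu i := by omega
      have hpos1 : 0 < mu (i + 1) := by omega
      have : i + 1 < lmu := (hlen (i + 1)).1 hpos1
      refine ⟨i, this, ?_⟩
      simp only [hiA, hi1A, if_true, if_false]
      omega
  · by_cases hi1A : i + 1 ∈ A
    · simp only [hiA, hi1A, if_true, if_false] at hi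
      omega
    · simp only [hiA, hi1A, if_false] at hi
      omega


/-- The set of columns to be "reduced", encoded from the pair `(A, B)`. -/
def colSet (lν lμ : ℕ) (A B : Finset ℕ) : Finset (Fin (lν + lμ)) :=
  Finset.univ.filter fun v =>
    ((v : ℕ) < lν ∧ lν - 1 - (v : ℕ) ∈ B) ∨ (lν ≤ (v : ℕ) ∧ (v : ℕ) - lν ∈ A)

lemma mem_colSet {lν lμ : ℕ} {A B : Finset ℕ} {v : Fin (lν + lμ)} :
    v ∈ colSet lν lμ A B ↔
      (if (v : ℕ) < lν then lν - 1 - (v : ℕ) ∈ B else (v : ℕ) - lν ∈ A) := by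
  unfold colSet
  rw [Finset.mem_filter]
  simp only [Finset.mem_univ, true_and]
  by_cases hv : (v : ℕ) < lν
  · rw [if_pos hv]
    constructor
    · rintro (⟨_, h⟩ | ⟨h, _⟩)
      · exact h
      · omega
    · intro h; exact Or.inl ⟨hv, h⟩
  · rw [if_neg hv]
    constructor
    · rintro (⟨h, _⟩ | ⟨_, h⟩)
      · omega
      · exact h
    · intro h; exact Or.inr ⟨by omega, h⟩

lemma card_colSet_lt (lν lμ : ℕ) (A B : Finset ℕ) (hB : B ⊆ Finset.range lν) :
    ((colSet lν lμ A B).filter fun v : Fin (lν + lμ) => (v : ℕ) < lν).card = B.card := by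
  refine Finset.card_bij' (fun v _ => lν - 1 - (v : ℕ))
    (fun b hb => ⟨lν - 1 - b, by
      have := Finset.mem_range.1 (hB hb); omega⟩) ?_ ?_ ?_ ?_
  · intro v hv
    obtain ⟨h1, h2⟩ := Finset.mem_filter.1 hv
    rw [mem_colSet, if_pos h2] at h1
    exact h1
  · intro b hb
    have hblν := Finset.mem_range.1 (hB hb)
    rw [Finset.mem_filter]
    constructor
    · rw [mem_colSet]
      have hval : ((⟨lν - 1 - b, by omega⟩ : Fin (lν + lμ)) : ℕ) = lν - 1 - b := rfl
      rw [hval, if_pos (by omega)]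
      have : lν - 1 - (lν - 1 - b) = b := by omega
      rw [this]; exact hb
    · show lν - 1 - b < lν
      omega
  · intro v hv
    obtain ⟨_, h2⟩ := Finset.mem_filter.1 hv
    apply Fin.ext
    show lν - 1 - (lν - 1 - (v : ℕ)) = (v : ℕ)
    omega
  · intro b hb
    have := Finset.mem_range.1 (hB hb)
    show lν - 1 - (lν - 1 - b) = b
    omega

lemma card_colSet_ge (lν lμ : ℕ) (A B : Finset ℕ) (hA : A ⊆ Finset.range lμ) :
    ((colSet lν lμ A B).filter fun v : Fin (lν + lμ) => ¬ (v : ℕ) < lν).card = A.card := by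
  refine Finset.card_bij' (fun v _ => (v : ℕ) - lν)
    (fun a ha => ⟨lν + a, by
      have := Finset.mem_range.1 (hA ha); omega⟩) ?_ ?_ ?_ ?_
  · intro v hv
    obtain ⟨h1, h2⟩ := Finset.mem_filter.1 hv
    rw [mem_colSet, if_neg h2] at h1
    exact h1
  · intro a ha
    have halμ := Finset.mem_range.1 (hA ha)
    rw [Finset.mem_filter]
    constructor
    · rw [mem_colSet]
      have hval : ((⟨lν + a, by omega⟩ : Fin (lν + lμ)) : ℕ) = lν + a := rfl
      rw [hval, if_neg (by omega)]
      have : lν + a - lν = a := by omega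
      rw [this]; exact ha
    · show ¬ lν + a < lν
      omega
  · intro v hv
    obtain ⟨_, h2⟩ := Finset.mem_filter.1 hv
    apply Fin.ext
    show lν + ((v : ℕ) - lν) = (v : ℕ)
    omega
  · intro a ha
    show lν + a - lν = a
    omega

lemma prod_colSet (lν lμ : ℕ) (A B : Finset ℕ) (hA : A ⊆ Finset.range lμ)
    (hB : B ⊆ Finset.range lν) (z : K) (hz : z ≠ 0) :
    (∏ v ∈ colSet lν lμ A B, (if (v : ℕ) < lν then z⁻¹ else z)) =
      z ^ ((A.card : ℤ) - (B.card : ℤ)) := by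
  rw [← Finset.prod_filter_mul_prod_filter_not (colSet lν lμ A B)
    (fun v : Fin (lν + lμ) => (v : ℕ) < lν)]
  have e1 : (∏ v ∈ (colSet lν lμ A B).filter (fun v : Fin (lν + lμ) => (v : ℕ) < lν),
      (if (v : ℕ) < lν then z⁻¹ else z)) = z⁻¹ ^ B.card := by
    rw [Finset.prod_congr rfl (fun v hv => if_pos (Finset.mem_filter.1 hv).2),
      Finset.prod_const, card_colSet_lt lν lμ A B hB]
  have e2 : (∏ v ∈ (colSet lν lμ A B).filter (fun v : Fin (lν + lμ) => ¬ (v : ℕ) < lν),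
      (if (v : ℕ) < lν then z⁻¹ else z)) = z ^ A.card := by
    rw [Finset.prod_congr rfl (fun v hv => if_neg (Finset.mem_filter.1 hv).2),
      Finset.prod_const, card_colSet_ge lν lμ A B hA]
  rw [e1, e2, zpow_sub₀ hz, zpow_natCast, zpow_natCast, div_eq_mul_inv, inv_pow]
  ring

lemma det_colSet (lν lμ : ℕ) (nu mu : ℕ → ℕ) (sx : Finset ι) (x : ι → K)
    (sy : Finset ι') (yy : ι' → K) (A B : Finset ℕ)
    (hA : A ⊆ Finset.range lμ) (hB : B ⊆ Finset.range lν)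
    (hnupos : ∀ i, i < lν → 0 < nu i) (hmupos : ∀ j, j < lμ → 0 < mu j) :
    Matrix.det (Matrix.of fun u v : Fin (lν + lμ) =>
        if v ∈ colSet lν lμ A B then Pmat lν lμ nu mu sx x sy yy (-1) v u
        else Pmat lν lμ nu mu sx x sy yy 0 v u) =
      superS sx x sy yy lν lμ (fun i => nu i - (if i ∈ B then 1 else 0))
        (fun i => mu i - (if i ∈ A then 1 else 0)) := by
  unfold superS Pmat
  congr 1
  ext u v
  simp only [Matrix.of_apply]
  by_cases hv : (v : ℕ) < lν
  · simp only [if_pos hv]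
    by_cases hm : lν - 1 - (v : ℕ) ∈ B
    · rw [if_pos (mem_colSet.2 (by rw [if_pos hv]; exact hm)), if_pos hm]
      have hpos : 0 < nu (lν - 1 - (v : ℕ)) := hnupos _ (by omega)
      congr 1
      omega
    · rw [if_neg (fun hc => hm (by have := mem_colSet.1 hc; rwa [if_pos hv] at this)),
        if_neg hm]
      congr 1
      omega
  · simp only [if_neg hv]
    by_cases hm : (v : ℕ) - lν ∈ A
    · rw [if_pos (mem_colSet.2 (by rw [if_neg hv]; exact hm)), if_pos hm]
      have hvlt : (v : ℕ) - lν < lμ := by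
        have := v.isLt; omega
      have hpos : 0 < mu ((v : ℕ) - lν) := hmupos _ hvlt
      congr 1
      omega
    · rw [if_neg (fun hc => hm (by have := mem_colSet.1 hc; rwa [if_neg hv] at this)),
        if_neg hm]
      congr 1
      omega

/-- Decoding of a column set into the pair `(A, B)`. -/
def AofS (lν lμ : ℕ) (S : Finset (Fin (lν + lμ))) : Finset ℕ :=
  (Finset.range lμ).filter fun j => ∃ w ∈ S, (w : ℕ) = lν + j

def BofS (lν lμ : ℕ) (S : Finset (Fin (lν + lμ))) : Finset ℕ :=
  (Finset.range lν).filter fun i => ∃ w ∈ S, (w : ℕ) = lν - 1 - i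

lemma AofS_colSet (lν lμ : ℕ) (A B : Finset ℕ) (hA : A ⊆ Finset.range lμ) :
    AofS lν lμ (colSet lν lμ A B) = A := by
  ext j
  rw [AofS, Finset.mem_filter, Finset.mem_range]
  constructor
  · rintro ⟨hj, w, hw, hwj⟩
    have := mem_colSet.1 hw
    rw [if_neg (by omega)] at this
    rwa [hwj, Nat.add_sub_cancel_left] at this
  · intro hjA
    have hj : j < lμ := Finset.mem_range.1 (hA hjA)
    refine ⟨hj, ⟨lν + j, by omega⟩, ?_, rfl⟩
    rw [mem_colSet]
    have hval : ((⟨lν + j, by omega⟩ : Fin (lν + lμ)) : ℕ) = lν + j := rfl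
    rw [hval, if_neg (by omega), Nat.add_sub_cancel_left]
    exact hjA

lemma BofS_colSet (lν lμ : ℕ) (A B : Finset ℕ) (hB : B ⊆ Finset.range lν) :
    BofS lν lμ (colSet lν lμ A B) = B := by
  ext i
  rw [BofS, Finset.mem_filter, Finset.mem_range]
  constructor
  · rintro ⟨hi, w, hw, hwi⟩
    have := mem_colSet.1 hw
    rw [if_pos (by omega)] at this
    rw [hwi] at this
    have e : lν - 1 - (lν - 1 - i) = i := by omega
    rwa [e] at this
  · intro hiB
    have hi : i < lν := Finset.mem_range.1 (hB hiB)
    refine ⟨hi, ⟨lν - 1 - i, by omega⟩, ?_, rfl⟩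
    rw [mem_colSet]
    have hval : ((⟨lν - 1 - i, by omega⟩ : Fin (lν + lμ)) : ℕ) = lν - 1 - i := rfl
    rw [hval, if_pos (by omega)]
    have e : lν - 1 - (lν - 1 - i) = i := by omega
    rw [e]
    exact hiB

lemma colSet_AofS_BofS (lν lμ : ℕ) (S : Finset (Fin (lν + lμ))) :
    colSet lν lμ (AofS lν lμ S) (BofS lν lμ S) = S := by
  ext v
  rw [mem_colSet]
  by_cases hv : (v : ℕ) < lν
  · rw [if_pos hv, BofS, Finset.mem_filter, Finset.mem_range]
    constructor
    · rintro ⟨_, w, hw, hwv⟩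
      have : w = v := Fin.ext (by omega)
      rwa [this] at hw
    · intro hvS
      exact ⟨by omega, v, hvS, by omega⟩
  · rw [if_neg hv, AofS, Finset.mem_filter, Finset.mem_range]
    constructor
    · rintro ⟨_, w, hw, hwv⟩
      have : w = v := Fin.ext (by omega)
      rwa [this] at hw
    · intro hvS
      have := v.isLt
      exact ⟨by omega, v, hvS, by omega⟩

/-- For nonzero `x_1, …, x_m` and `y_1, …, y_n` (`n ≥ 1`) and a composite
partition `ν̄;μ`,
`s_{ν̄;μ}(x/y) = Σ_{α,β} s_{β̄;α}(x/y^{(n−1)}) y_n^{a−b}`,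
the sum being over all pairs of partitions `α, β` with `0 ≤ μ_i − α_i ≤ 1` and
`0 ≤ ν_i − β_i ≤ 1` for all `i`, where `a = Σ_i (μ_i − α_i)`, `b = Σ_i (ν_i − β_i)`, and
each `s_{β̄;α}(x/y^{(n−1)})` is computed by the same determinant with `β`, `α` padded with
zero parts to `l(ν)` and `l(μ)` parts.  The pairs `(α, β)` are parametrized by the pairs of
sets `A = {i : α_i = μ_i − 1} ⊆ {1, …, l(μ)}`, `B = {i : β_i = ν_i − 1} ⊆ {1, …, l(ν)}`
for which the resulting sequences are still partitions (i.e. antitone). -/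
theorem superS_isolate_last_variable (m n : ℕ) (hn : 0 < n)
    (x : Fin m → K) (hx0 : ∀ i, x i ≠ 0) (y : Fin n → K) (hy0 : ∀ j, y j ≠ 0)
    (ν μ : ℕ → ℕ) (hν : Antitone ν) (hμ : Antitone μ) (lν lμ : ℕ)
    (hνlen : ∀ i, 0 < ν i ↔ i < lν) (hμlen : ∀ i, 0 < μ i ↔ i < lμ) :
    superS Finset.univ x Finset.univ y lν lμ ν μ =
      ∑ A ∈ (Finset.range lμ).powerset, ∑ B ∈ (Finset.range lν).powerset,
        if Antitone (fun i => μ i - (if i ∈ A then 1 else 0)) ∧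
            Antitone (fun i => ν i - (if i ∈ B then 1 else 0)) then
          superS Finset.univ x (Finset.univ.filter fun j : Fin n => (j : ℕ) + 1 < n) y
              lν lμ (fun i => ν i - (if i ∈ B then 1 else 0))
              (fun i => μ i - (if i ∈ A then 1 else 0)) *
            y ⟨n - 1, by omega⟩ ^ ((A.card : ℤ) - (B.card : ℤ))
        else 0 := by

  have hνpos : ∀ i, i < lν → 0 < ν i := fun i hi => (hνlen i).2 hi
  have hμpos : ∀ j, j < lμ → 0 < μ j := fun j hj => (hμlen j).2 hj
  set last : Fin n := ⟨n - 1, by omega⟩ with hlastdef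
  set sy' : Finset (Fin n) := Finset.univ.filter (fun j : Fin n => (j : ℕ) + 1 < n)
    with hsy'def
  have hlastmem : last ∉ sy' := by
    rw [hsy'def, Finset.mem_filter]
    rintro ⟨-, h⟩
    rw [hlastdef] at h
    simp only at h
    omega
  have huniv : (Finset.univ : Finset (Fin n)) = insert last sy' := by
    ext j
    simp only [Finset.mem_univ, Finset.mem_insert, hsy'def, Finset.mem_filter, true_and,
      true_iff]
    by_cases hj : (j : ℕ) + 1 < n
    · exact Or.inr hj
    · left
      apply Fin.ext
      rw [hlastdef]
      show (j : ℕ) = n - 1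
      have := j.isLt
      omega
  have step1 : superS Finset.univ x Finset.univ y lν lμ ν μ =
      Matrix.det (Matrix.of fun u v : Fin (lν + lμ) =>
        Pmat lν lμ ν μ Finset.univ x sy' y 0 v u +
          (if (v : ℕ) < lν then (y last)⁻¹ else y last) *
            Pmat lν lμ ν μ Finset.univ x sy' y (0 - 1) v u) := by
    rw [superS_eq_Pmat]
    congr 1
    ext u v
    simp only [Matrix.of_apply]
    rw [huniv, Pmat_insert lν lμ ν μ Finset.univ x last sy' hlastmem y 0 v u]
  have expand := det_expand (K := K)
    (fun (v u : Fin (lν + lμ)) => Pmat lν lμ ν μ Finset.univ x sy' y 0 v u)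
    (fun (v u : Fin (lν + lμ)) => Pmat lν lμ ν μ Finset.univ x sy' y (0 - 1) v u)
    (fun v : Fin (lν + lμ) => if (v : ℕ) < lν then (y last)⁻¹ else y last)
  rw [step1, expand, ← Finset.sum_product']
  refine (Finset.sum_bij' (fun p _ => colSet lν lμ p.1 p.2)
    (fun S _ => (AofS lν lμ S, BofS lν lμ S)) (fun p hp => Finset.mem_univ _)
    (fun S _ => ?memAB) (fun p hp => ?leftinv) (fun S _ => colSet_AofS_BofS lν lμ S)
    (fun p hp => ?val)).symm
  case memAB =>
    rw [Finset.mem_product]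
    exact ⟨Finset.mem_powerset.2 (Finset.filter_subset _ _),
      Finset.mem_powerset.2 (Finset.filter_subset _ _)⟩
  case leftinv =>
    have hA : p.1 ⊆ Finset.range lμ := Finset.mem_powerset.1 (Finset.mem_product.1 hp).1
    have hB : p.2 ⊆ Finset.range lν := Finset.mem_powerset.1 (Finset.mem_product.1 hp).2
    rw [Prod.ext_iff]
    exact ⟨AofS_colSet lν lμ p.1 p.2 hA, BofS_colSet lν lμ p.1 p.2 hB⟩
  case val =>
    have hA : p.1 ⊆ Finset.range lμ := Finset.mem_powerset.1 (Finset.mem_product.1 hp).1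
    have hB : p.2 ⊆ Finset.range lν := Finset.mem_powerset.1 (Finset.mem_product.1 hp).2
    obtain ⟨A, B⟩ := p
    simp only at hA hB ⊢
    have hdet : Matrix.det (Matrix.of fun u v : Fin (lν + lμ) =>
        if v ∈ colSet lν lμ A B then Pmat lν lμ ν μ Finset.univ x sy' y (0 - 1) v u
        else Pmat lν lμ ν μ Finset.univ x sy' y 0 v u) =
        superS Finset.univ x sy' y lν lμ (fun i => ν i - (if i ∈ B then 1 else 0))
          (fun i => μ i - (if i ∈ A then 1 else 0)) := by
      rw [show (0 - 1 : ℤ) = -1 from by norm_num]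
      exact det_colSet lν lμ ν μ Finset.univ x sy' y A B hA hB hνpos hμpos
    rw [hdet, prod_colSet lν lμ A B hA hB (y last) (hy0 last)]
    by_cases hcond : Antitone (fun i => μ i - (if i ∈ A then 1 else 0)) ∧
        Antitone (fun i => ν i - (if i ∈ B then 1 else 0))
    · rw [if_pos hcond, mul_comm]
    · rw [if_neg hcond]
      rcases not_and_or.1 hcond with hbad | hbad
      · obtain ⟨i, hi1, hEq⟩ := exists_bad μ hμ lμ hμlen A hA hbad
        rw [superS_zero_of_mu Finset.univ x sy' y lν lμ
          (fun i => ν i - (if i ∈ B then 1 else 0))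
          (fun i => μ i - (if i ∈ A then 1 else 0)) i hi1 hEq, mul_zero]
      · obtain ⟨i, hi1, hEq⟩ := exists_bad ν hν lν hνlen B hB hbad
        rw [superS_zero_of_nu Finset.univ x sy' y lν lμ
          (fun i => ν i - (if i ∈ B then 1 else 0))
          (fun i => μ i - (if i ∈ A then 1 else 0)) i hi1 hEq, mul_zero]
end
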